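/- Uniform covariance bounds on tilts imply entropic stability: let π be a probability measure on ℝ^d whose cumulant generating function χ(y) := log E_{x∼π}[exp(⟨y,x⟩)] is finite for every y ∈ ℝ^d, and suppose that for some α > 0 and every y ∈ ℝ^d the covariance matrix of the exponential tilt satisfies Cov(T_y π) ⪯ α I_d. Then π is α-entropically stable: for every y ∈ ℝ^d, ½‖b(T_y π) − b(π)‖₂² ≤ α · KL(T_y π ‖ π). -/

import Mathlib

open MeasureTheory Real
open scoped NNReal ENNReal

/-- Real-valued Kullback-Leibler divergence `KL(ν‖ρ) = ∫ log (dν/dρ) dν`. -/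
noncomputable def klReal {α : Type*} [MeasurableSpace α] (ν ρ : Measure α) : ℝ :=
  ∫ x, Real.log ((ν.rnDeriv ρ x).toReal) ∂ν

/-- The exponential tilt `T_y μ`: the probability measure with density proportional to
`exp ⟨y, ·⟩` with respect to `μ`. -/
noncomputable def expTilt (d : ℕ) (μ : Measure (EuclideanSpace ℝ (Fin d)))
    (y : EuclideanSpace ℝ (Fin d)) : Measure (EuclideanSpace ℝ (Fin d)) :=
  μ.withDensity (fun x => ENNReal.ofReal
    (Real.exp ((inner ℝ y x : ℝ)) / ∫ x', Real.exp ((inner ℝ y x' : ℝ)) ∂μ))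

/-- The barycentre `b(μ) = E_{x∼μ}[x]` of a measure. -/
noncomputable def bary (d : ℕ) (μ : Measure (EuclideanSpace ℝ (Fin d))) :
    EuclideanSpace ℝ (Fin d) :=
  ∫ x, x ∂μ

section
variable {d : ℕ} {μ : Measure (EuclideanSpace ℝ (Fin d))} [IsProbabilityMeasure μ]

lemma sq_le_exp_abs' (w : ℝ) : w ^ 2 ≤ 4 * exp |w| := by
  have h1 : |w| / 2 + 1 ≤ exp (|w| / 2) := add_one_le_exp _
  have h2 : exp (|w| / 2) * exp (|w| / 2) = exp |w| := by rw [← exp_add]; ring_nf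
  have h3 : 0 ≤ |w| := abs_nonneg w
  nlinarith [sq_abs w]

lemma exp_abs_add_le (a b : ℝ) : exp (|a| + b) ≤ exp (a + b) + exp (-a + b) := by
  rcases abs_cases a with ⟨h, _⟩ | ⟨h, _⟩ <;> rw [h]
  · exact le_add_of_nonneg_right (exp_pos _).le
  · exact le_add_of_nonneg_left (exp_pos _).le

lemma abs_le_exp_abs' (w : ℝ) : |w| ≤ exp |w| :=
  (le_of_lt (lt_add_of_pos_left _ one_pos)).trans (by linarith [add_one_le_exp |w|])

lemma inner_continuous (z : EuclideanSpace ℝ (Fin d)) :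
    Continuous (fun x : EuclideanSpace ℝ (Fin d) => (inner ℝ z x : ℝ)) :=
  continuous_const.inner continuous_id

lemma exp_inner_aesm (y : EuclideanSpace ℝ (Fin d)) :
    AEStronglyMeasurable (fun x : EuclideanSpace ℝ (Fin d) => exp ((inner ℝ y x : ℝ))) μ :=
  (continuous_exp.comp (inner_continuous y)).aestronglyMeasurable

/-- integrability of `⟪z,x⟫ * exp⟪y,x⟫`. -/
lemma integrable_inner_mul_exp
    (hcgf : ∀ y : EuclideanSpace ℝ (Fin d), Integrable (fun x => exp ((inner ℝ y x : ℝ))) μ)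
    (z y : EuclideanSpace ℝ (Fin d)) :
    Integrable (fun x => (inner ℝ z x : ℝ) * exp ((inner ℝ y x : ℝ))) μ := by
  refine Integrable.mono' ((hcgf (z + y)).add (hcgf (-z + y)))
    (((inner_continuous z).mul (continuous_exp.comp (inner_continuous y))).aestronglyMeasurable)
    (Filter.Eventually.of_forall fun x => ?_)
  have h : |(inner ℝ z x : ℝ)| * exp ((inner ℝ y x : ℝ)) ≤
      exp ((inner ℝ z x : ℝ) + (inner ℝ y x : ℝ)) + exp (-(inner ℝ z x : ℝ) + (inner ℝ y x : ℝ)) := by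
    calc |(inner ℝ z x : ℝ)| * exp ((inner ℝ y x : ℝ))
        ≤ exp |(inner ℝ z x : ℝ)| * exp ((inner ℝ y x : ℝ)) := by gcongr; exact abs_le_exp_abs' _
      _ = exp (|(inner ℝ z x : ℝ)| + (inner ℝ y x : ℝ)) := (exp_add _ _).symm
      _ ≤ _ := exp_abs_add_le _ _
  rw [Real.norm_eq_abs, abs_mul, abs_of_pos (exp_pos _)]
  show |(inner ℝ z x : ℝ)| * exp ((inner ℝ y x : ℝ)) ≤
    exp ((inner ℝ (z + y) x : ℝ)) + exp ((inner ℝ (-z + y) x : ℝ))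
  rw [inner_add_left, inner_add_left, inner_neg_left]
  exact h

end

section
variable {d : ℕ} {μ : Measure (EuclideanSpace ℝ (Fin d))} [IsProbabilityMeasure μ]

lemma integrable_inner_sq_mul_exp
    (hcgf : ∀ y : EuclideanSpace ℝ (Fin d), Integrable (fun x => exp ((inner ℝ y x : ℝ))) μ)
    (z y : EuclideanSpace ℝ (Fin d)) :
    Integrable (fun x => (inner ℝ z x : ℝ) ^ 2 * exp ((inner ℝ y x : ℝ))) μ := by
  refine Integrable.mono' ((((hcgf (z + y)).add (hcgf (-z + y)))).const_mul 4)
    ((((inner_continuous z).pow 2).mul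
      (continuous_exp.comp (inner_continuous y))).aestronglyMeasurable)
    (Filter.Eventually.of_forall fun x => ?_)
  rw [Real.norm_eq_abs, abs_mul, abs_of_pos (exp_pos _), abs_of_nonneg (sq_nonneg _)]
  show (inner ℝ z x : ℝ) ^ 2 * exp ((inner ℝ y x : ℝ)) ≤
    4 * (exp ((inner ℝ (z + y) x : ℝ)) + exp ((inner ℝ (-z + y) x : ℝ)))
  rw [inner_add_left, inner_add_left, inner_neg_left]
  calc (inner ℝ z x : ℝ) ^ 2 * exp ((inner ℝ y x : ℝ))
      ≤ 4 * exp |(inner ℝ z x : ℝ)| * exp ((inner ℝ y x : ℝ)) := by gcongr ?_ * _; exact sq_le_exp_abs' _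
    _ = 4 * exp (|(inner ℝ z x : ℝ)| + (inner ℝ y x : ℝ)) := by rw [mul_assoc, ← exp_add]
    _ ≤ _ := by have := exp_abs_add_le (inner ℝ z x : ℝ) (inner ℝ y x : ℝ); linarith

/-- `x ↦ exp ⟪y,x⟫ • x` is integrable. -/
lemma integrable_exp_smul_id
    (hcgf : ∀ y : EuclideanSpace ℝ (Fin d), Integrable (fun x => exp ((inner ℝ y x : ℝ))) μ)
    (y : EuclideanSpace ℝ (Fin d)) :
    Integrable (fun x : EuclideanSpace ℝ (Fin d) => exp ((inner ℝ y x : ℝ)) • x) μ := by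
  have hsum : Integrable (fun x : EuclideanSpace ℝ (Fin d) =>
      ∑ i : Fin d, |(inner ℝ (EuclideanSpace.single i (1:ℝ)) x : ℝ)| * exp ((inner ℝ y x : ℝ))) μ := by
    apply integrable_finset_sum
    intro i _
    have h := (integrable_inner_mul_exp hcgf (EuclideanSpace.single i (1:ℝ)) y)
    exact h.abs.congr (Filter.Eventually.of_forall fun x => by
      simp only [abs_mul, abs_of_pos (exp_pos _)])
  refine Integrable.mono' hsum
    ((continuous_exp.comp (inner_continuous y)).smul continuous_id).aestronglyMeasurable
    (Filter.Eventually.of_forall fun x => ?_)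
  rw [norm_smul, Real.norm_eq_abs, abs_of_pos (exp_pos _)]
  have hnorm : ‖x‖ ≤ ∑ i : Fin d, |(inner ℝ (EuclideanSpace.single i (1:ℝ)) x : ℝ)| := by
    have h1 : ‖x‖ = Real.sqrt (∑ i : Fin d, |x i| ^ 2) := by
      simp [EuclideanSpace.norm_eq, Real.norm_eq_abs]
    rw [h1]
    have h2 : (∑ i : Fin d, |x i| ^ 2) ≤ (∑ i : Fin d, |x i|) ^ 2 :=
      Finset.sum_sq_le_sq_sum_of_nonneg (fun i _ => abs_nonneg _)
    calc Real.sqrt (∑ i : Fin d, |x i| ^ 2) ≤ Real.sqrt ((∑ i : Fin d, |x i|) ^ 2) :=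
          Real.sqrt_le_sqrt h2
      _ = ∑ i : Fin d, |x i| := Real.sqrt_sq (Finset.sum_nonneg fun i _ => abs_nonneg _)
      _ = ∑ i : Fin d, |(inner ℝ (EuclideanSpace.single i (1:ℝ)) x : ℝ)| := by
          refine Finset.sum_congr rfl fun i _ => ?_
          simp [EuclideanSpace.inner_single_left]
  calc exp ((inner ℝ y x : ℝ)) * ‖x‖
      ≤ exp ((inner ℝ y x : ℝ)) * ∑ i : Fin d, |(inner ℝ (EuclideanSpace.single i (1:ℝ)) x : ℝ)| := by
        gcongr
    _ = ∑ i : Fin d, |(inner ℝ (EuclideanSpace.single i (1:ℝ)) x : ℝ)| * exp ((inner ℝ y x : ℝ)) := by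
        rw [Finset.mul_sum]; exact Finset.sum_congr rfl fun i _ => mul_comm _ _

end

section
variable {d : ℕ} {μ : Measure (EuclideanSpace ℝ (Fin d))} [IsProbabilityMeasure μ]
  (hcgf : ∀ y : EuclideanSpace ℝ (Fin d), Integrable (fun x => exp ((inner ℝ y x : ℝ))) μ)

lemma Z_pos (hcgf : ∀ y : EuclideanSpace ℝ (Fin d),
    Integrable (fun x => exp ((inner ℝ y x : ℝ))) μ) (y : EuclideanSpace ℝ (Fin d)) :
    0 < ∫ x, exp ((inner ℝ y x : ℝ)) ∂μ := by
  have h : ∫ x, exp ((inner ℝ y x : ℝ)) ∂μ = ProbabilityTheory.mgf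
      (fun x => (inner ℝ y x : ℝ)) μ 1 := by
    rw [ProbabilityTheory.mgf]
    simp
  rw [h]
  exact ProbabilityTheory.mgf_pos (by simpa using hcgf y)

/-- Integral with respect to the tilted measure. -/
lemma integral_tilt {F : Type*} [NormedAddCommGroup F] [NormedSpace ℝ F]
    (y : EuclideanSpace ℝ (Fin d)) (f : EuclideanSpace ℝ (Fin d) → F) :
    ∫ x, f x ∂(expTilt d μ y) =
      ∫ x, (exp ((inner ℝ y x : ℝ)) / ∫ x', exp ((inner ℝ y x' : ℝ)) ∂μ) • f x ∂μ := by
  rw [expTilt]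
  have hmeas : AEMeasurable (fun x => Real.toNNReal
      (exp ((inner ℝ y x : ℝ)) / ∫ x', exp ((inner ℝ y x' : ℝ)) ∂μ)) μ :=
    (measurable_real_toNNReal.comp
      (((continuous_exp.comp (inner_continuous y)).measurable).div_const _)).aemeasurable
  have hofReal : (fun x => ENNReal.ofReal
      (exp ((inner ℝ y x : ℝ)) / ∫ x', exp ((inner ℝ y x' : ℝ)) ∂μ)) =
      fun x => ((Real.toNNReal (exp ((inner ℝ y x : ℝ)) / ∫ x', exp ((inner ℝ y x' : ℝ)) ∂μ) : ℝ≥0) :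
        ℝ≥0∞) := rfl
  rw [hofReal, integral_withDensity_eq_integral_smul₀ hmeas]
  refine integral_congr_ae (Filter.Eventually.of_forall fun x => ?_)
  beta_reduce
  rw [NNReal.smul_def, Real.coe_toNNReal]
  positivity

lemma integrable_tilt_iff {F : Type*} [NormedAddCommGroup F] [NormedSpace ℝ F]
    (y : EuclideanSpace ℝ (Fin d)) (f : EuclideanSpace ℝ (Fin d) → F) :
    Integrable f (expTilt d μ y) ↔
      Integrable (fun x =>
        (exp ((inner ℝ y x : ℝ)) / ∫ x', exp ((inner ℝ y x' : ℝ)) ∂μ) • f x) μ := by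
  rw [expTilt]
  have hmeas : AEMeasurable (fun x => Real.toNNReal
      (exp ((inner ℝ y x : ℝ)) / ∫ x', exp ((inner ℝ y x' : ℝ)) ∂μ)) μ :=
    (measurable_real_toNNReal.comp
      (((continuous_exp.comp (inner_continuous y)).measurable).div_const _)).aemeasurable
  have hofReal : (fun x => ENNReal.ofReal
      (exp ((inner ℝ y x : ℝ)) / ∫ x', exp ((inner ℝ y x' : ℝ)) ∂μ)) =
      fun x => ((Real.toNNReal (exp ((inner ℝ y x : ℝ)) / ∫ x', exp ((inner ℝ y x' : ℝ)) ∂μ) : ℝ≥0) :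
        ℝ≥0∞) := rfl
  rw [hofReal, integrable_withDensity_iff_integrable_smul₀ hmeas]
  refine integrable_congr (Filter.Eventually.of_forall fun x => ?_)
  beta_reduce
  rw [NNReal.smul_def, Real.coe_toNNReal]
  positivity

end

section
variable {d : ℕ} {μ : Measure (EuclideanSpace ℝ (Fin d))} [IsProbabilityMeasure μ]

lemma tilt_isProbability
    (hcgf : ∀ y : EuclideanSpace ℝ (Fin d), Integrable (fun x => exp ((inner ℝ y x : ℝ))) μ)
    (y : EuclideanSpace ℝ (Fin d)) : IsProbabilityMeasure (expTilt d μ y) := by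
  constructor
  have hZ := Z_pos hcgf y
  set Z := ∫ x, exp ((inner ℝ y x : ℝ)) ∂μ with hZdef
  have hint : Integrable (fun x => exp ((inner ℝ y x : ℝ)) / Z) μ := (hcgf y).div_const _
  have hnn : 0 ≤ᵐ[μ] fun x => exp ((inner ℝ y x : ℝ)) / Z :=
    Filter.Eventually.of_forall fun x => by positivity
  rw [expTilt, withDensity_apply _ MeasurableSet.univ, Measure.restrict_univ,
    ← ofReal_integral_eq_lintegral_ofReal hint hnn]
  rw [integral_div, div_self hZ.ne', ENNReal.ofReal_one]

lemma integrable_id_tilt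
    (hcgf : ∀ y : EuclideanSpace ℝ (Fin d), Integrable (fun x => exp ((inner ℝ y x : ℝ))) μ)
    (y : EuclideanSpace ℝ (Fin d)) :
    Integrable (fun x : EuclideanSpace ℝ (Fin d) => x) (expTilt d μ y) := by
  rw [integrable_tilt_iff]
  have h := (integrable_exp_smul_id hcgf y).smul ((∫ x, exp ((inner ℝ y x : ℝ)) ∂μ)⁻¹)
  refine h.congr (Filter.Eventually.of_forall fun x => ?_)
  simp only [Pi.smul_apply, smul_smul]
  rw [div_eq_inv_mul]

lemma inner_bary_tilt
    (hcgf : ∀ y : EuclideanSpace ℝ (Fin d), Integrable (fun x => exp ((inner ℝ y x : ℝ))) μ)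
    (y z : EuclideanSpace ℝ (Fin d)) :
    (inner ℝ z (∫ x, x ∂(expTilt d μ y)) : ℝ) =
      (∫ x, (inner ℝ z x : ℝ) * exp ((inner ℝ y x : ℝ)) ∂μ) / ∫ x, exp ((inner ℝ y x : ℝ)) ∂μ := by
  rw [← integral_inner (integrable_id_tilt hcgf y) z, integral_tilt]
  have : ∀ x : EuclideanSpace ℝ (Fin d),
      (exp ((inner ℝ y x : ℝ)) / ∫ x', exp ((inner ℝ y x' : ℝ)) ∂μ) • (inner ℝ z x : ℝ) =
      ((inner ℝ z x : ℝ) * exp ((inner ℝ y x : ℝ))) * (∫ x', exp ((inner ℝ y x' : ℝ)) ∂μ)⁻¹ := by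
    intro x; rw [smul_eq_mul]; ring
  rw [integral_congr_ae (Filter.Eventually.of_forall this), integral_mul_const, div_eq_mul_inv]

/-- expectation of `⟪z,·⟫` under the tilt. -/
lemma integral_inner_tilt
    (hcgf : ∀ y : EuclideanSpace ℝ (Fin d), Integrable (fun x => exp ((inner ℝ y x : ℝ))) μ)
    (y z : EuclideanSpace ℝ (Fin d)) :
    ∫ x, (inner ℝ z x : ℝ) ∂(expTilt d μ y) =
      (∫ x, (inner ℝ z x : ℝ) * exp ((inner ℝ y x : ℝ)) ∂μ) / ∫ x, exp ((inner ℝ y x : ℝ)) ∂μ := by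
  rw [← inner_bary_tilt hcgf y z, ← integral_inner (integrable_id_tilt hcgf y) z]

/-- expectation of `⟪z,·⟫ ^ 2` under the tilt. -/
lemma integral_inner_sq_tilt
    (hcgf : ∀ y : EuclideanSpace ℝ (Fin d), Integrable (fun x => exp ((inner ℝ y x : ℝ))) μ)
    (y z : EuclideanSpace ℝ (Fin d)) :
    ∫ x, (inner ℝ z x : ℝ) ^ 2 ∂(expTilt d μ y) =
      (∫ x, (inner ℝ z x : ℝ) ^ 2 * exp ((inner ℝ y x : ℝ)) ∂μ) / ∫ x, exp ((inner ℝ y x : ℝ)) ∂μ := by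
  rw [integral_tilt]
  have : ∀ x : EuclideanSpace ℝ (Fin d),
      (exp ((inner ℝ y x : ℝ)) / ∫ x', exp ((inner ℝ y x' : ℝ)) ∂μ) • ((inner ℝ z x : ℝ) ^ 2) =
      ((inner ℝ z x : ℝ) ^ 2 * exp ((inner ℝ y x : ℝ))) * (∫ x', exp ((inner ℝ y x' : ℝ)) ∂μ)⁻¹ := by
    intro x; rw [smul_eq_mul]; ring
  rw [integral_congr_ae (Filter.Eventually.of_forall this), integral_mul_const, div_eq_mul_inv]

end

section
variable {d : ℕ} {μ : Measure (EuclideanSpace ℝ (Fin d))} [IsProbabilityMeasure μ]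

lemma integrable_inner_tilt'
    (hcgf : ∀ y : EuclideanSpace ℝ (Fin d), Integrable (fun x => exp ((inner ℝ y x : ℝ))) μ)
    (y z : EuclideanSpace ℝ (Fin d)) :
    Integrable (fun x => (inner ℝ z x : ℝ)) (expTilt d μ y) := by
  rw [integrable_tilt_iff]
  refine ((integrable_inner_mul_exp hcgf z y).mul_const
    ((∫ x, exp ((inner ℝ y x : ℝ)) ∂μ)⁻¹)).congr (Filter.Eventually.of_forall fun x => ?_)
  beta_reduce
  rw [smul_eq_mul]; ring

lemma klReal_tilt
    (hcgf : ∀ y : EuclideanSpace ℝ (Fin d), Integrable (fun x => exp ((inner ℝ y x : ℝ))) μ)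
    (y : EuclideanSpace ℝ (Fin d)) :
    klReal (expTilt d μ y) μ =
      (inner ℝ y (∫ x, x ∂(expTilt d μ y)) : ℝ) -
        Real.log (∫ x, exp ((inner ℝ y x : ℝ)) ∂μ) := by
  have hZ := Z_pos hcgf y
  have hprob := tilt_isProbability hcgf y
  set Z := ∫ x, exp ((inner ℝ y x : ℝ)) ∂μ with hZdef
  have hmeas : Measurable (fun x : EuclideanSpace ℝ (Fin d) =>
      ENNReal.ofReal (exp ((inner ℝ y x : ℝ)) / Z)) :=
    ENNReal.measurable_ofReal.comp
      (((continuous_exp.comp (inner_continuous y)).measurable).div_const _)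
  have h1 : (expTilt d μ y).rnDeriv μ =ᵐ[μ]
      fun x => ENNReal.ofReal (exp ((inner ℝ y x : ℝ)) / Z) := by
    rw [expTilt]
    exact Measure.rnDeriv_withDensity μ hmeas
  have hac : expTilt d μ y ≪ μ := withDensity_absolutelyContinuous μ _
  have h2 : ∀ᵐ x ∂(expTilt d μ y),
      Real.log (((expTilt d μ y).rnDeriv μ x).toReal) =
        (inner ℝ y x : ℝ) - Real.log Z := by
    filter_upwards [hac.ae_le h1] with x hx
    rw [hx, ENNReal.toReal_ofReal (by positivity),
      Real.log_div (exp_ne_zero _) hZ.ne', Real.log_exp]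
  rw [klReal, integral_congr_ae h2, integral_sub (integrable_inner_tilt' hcgf y y)
    (integrable_const _), integral_const, probReal_univ, one_smul,
    integral_inner (integrable_id_tilt hcgf y) y]

end

section calc1

lemma sv_le (t₀ s v : ℝ) (hs : |s - t₀| ≤ 1) : s * v ≤ t₀ * v + |v| := by
  nlinarith [le_abs_self ((s - t₀) * v), abs_mul (s - t₀) v,
    mul_le_mul_of_nonneg_right hs (abs_nonneg v), abs_nonneg v]

lemma exp_two_abs_le (b v : ℝ) :
    exp (b + t₀ * v + 2 * |v|) ≤ exp (b + (t₀ + 2) * v) + exp (b + (t₀ - 2) * v) := by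
  rcases le_total 0 v with hv | hv
  · rw [abs_of_nonneg hv, show b + t₀ * v + 2 * v = b + (t₀ + 2) * v from by ring]
    exact le_add_of_nonneg_right (exp_pos _).le
  · rw [abs_of_nonpos hv, show b + t₀ * v + 2 * -v = b + (t₀ - 2) * v from by ring]
    exact le_add_of_nonneg_left (exp_pos _).le

lemma domination1 {t₀ s : ℝ} (b v : ℝ) (hs : |s - t₀| ≤ 1) :
    |v| * exp (b + s * v) ≤ exp (b + (t₀ + 2) * v) + exp (b + (t₀ - 2) * v) := by
  calc |v| * exp (b + s * v) ≤ exp |v| * exp (b + s * v) := by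
        gcongr; exact abs_le_exp_abs' v
    _ = exp (b + s * v + |v|) := by rw [← exp_add]; ring_nf
    _ ≤ exp (b + t₀ * v + 2 * |v|) := by
        apply exp_le_exp.2
        have := sv_le t₀ s v hs
        have := le_abs_self v
        linarith
    _ ≤ _ := exp_two_abs_le b v

lemma domination2 {t₀ s : ℝ} (b v : ℝ) (hs : |s - t₀| ≤ 1) :
    v ^ 2 * exp (b + s * v) ≤
      4 * (exp (b + (t₀ + 2) * v) + exp (b + (t₀ - 2) * v)) := by
  calc v ^ 2 * exp (b + s * v) ≤ 4 * exp |v| * exp (b + s * v) := by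
        gcongr ?_ * _; exact sq_le_exp_abs' v
    _ = 4 * exp (b + s * v + |v|) := by rw [mul_assoc, ← exp_add]; ring_nf
    _ ≤ 4 * exp (b + t₀ * v + 2 * |v|) := by
        have h1 : b + s * v + |v| ≤ b + t₀ * v + 2 * |v| := by
          have := sv_le t₀ s v hs
          have := le_abs_self v
          linarith
        have := exp_le_exp.2 h1
        linarith
    _ ≤ _ := by have := exp_two_abs_le (t₀ := t₀) b v; linarith

end calc1

section calc2
variable {d : ℕ} {μ : Measure (EuclideanSpace ℝ (Fin d))} [IsProbabilityMeasure μ]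

lemma inner_base (y w x : EuclideanSpace ℝ (Fin d)) (t : ℝ) :
    (inner ℝ (y + t • w) x : ℝ) = (inner ℝ y x : ℝ) + t * (inner ℝ w x : ℝ) := by
  rw [inner_add_left, real_inner_smul_left]

lemma integrable_exp_base
    (hcgf : ∀ y : EuclideanSpace ℝ (Fin d), Integrable (fun x => exp ((inner ℝ y x : ℝ))) μ)
    (y w : EuclideanSpace ℝ (Fin d)) (t : ℝ) :
    Integrable (fun x => exp ((inner ℝ y x : ℝ) + t * (inner ℝ w x : ℝ))) μ := by
  refine (hcgf (y + t • w)).congr (Filter.Eventually.of_forall fun x => ?_)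
  simp only [inner_base]

lemma integrable_inner_exp_base
    (hcgf : ∀ y : EuclideanSpace ℝ (Fin d), Integrable (fun x => exp ((inner ℝ y x : ℝ))) μ)
    (y w : EuclideanSpace ℝ (Fin d)) (t : ℝ) :
    Integrable (fun x => (inner ℝ w x : ℝ) * exp ((inner ℝ y x : ℝ) + t * (inner ℝ w x : ℝ))) μ := by
  refine (integrable_inner_mul_exp hcgf w (y + t • w)).congr
    (Filter.Eventually.of_forall fun x => ?_)
  simp only [inner_base]

lemma integrable_inner_sq_exp_base
    (hcgf : ∀ y : EuclideanSpace ℝ (Fin d), Integrable (fun x => exp ((inner ℝ y x : ℝ))) μ)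
    (y w : EuclideanSpace ℝ (Fin d)) (t : ℝ) :
    Integrable (fun x => (inner ℝ w x : ℝ) ^ 2 * exp ((inner ℝ y x : ℝ) + t * (inner ℝ w x : ℝ))) μ := by
  refine (integrable_inner_sq_mul_exp hcgf w (y + t • w)).congr
    (Filter.Eventually.of_forall fun x => ?_)
  simp only [inner_base]

lemma hasDerivAt_A
    (hcgf : ∀ y : EuclideanSpace ℝ (Fin d), Integrable (fun x => exp ((inner ℝ y x : ℝ))) μ)
    (y w : EuclideanSpace ℝ (Fin d)) (t₀ : ℝ) :
    HasDerivAt (fun t => ∫ x, exp ((inner ℝ y x : ℝ) + t * (inner ℝ w x : ℝ)) ∂μ)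
      (∫ x, (inner ℝ w x : ℝ) * exp ((inner ℝ y x : ℝ) + t₀ * (inner ℝ w x : ℝ)) ∂μ) t₀ := by
  have hbd : Integrable (fun x => exp ((inner ℝ y x : ℝ) + (t₀ + 2) * (inner ℝ w x : ℝ)) +
      exp ((inner ℝ y x : ℝ) + (t₀ - 2) * (inner ℝ w x : ℝ))) μ :=
    (integrable_exp_base hcgf y w (t₀ + 2)).add (integrable_exp_base hcgf y w (t₀ - 2))
  have hm1 : ∀ s : ℝ, AEStronglyMeasurable
      (fun x : EuclideanSpace ℝ (Fin d) => exp ((inner ℝ y x : ℝ) + s * (inner ℝ w x : ℝ))) μ :=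
    fun s => (continuous_exp.comp ((inner_continuous y).add
      (continuous_const.mul (inner_continuous w)))).aestronglyMeasurable
  have hm2 : AEStronglyMeasurable
      (fun x : EuclideanSpace ℝ (Fin d) =>
        (inner ℝ w x : ℝ) * exp ((inner ℝ y x : ℝ) + t₀ * (inner ℝ w x : ℝ))) μ :=
    ((inner_continuous w).mul (continuous_exp.comp ((inner_continuous y).add
      (continuous_const.mul (inner_continuous w))))).aestronglyMeasurable
  refine (hasDerivAt_integral_of_dominated_loc_of_deriv_le
    (F' := fun s x => (inner ℝ w x : ℝ) * exp ((inner ℝ y x : ℝ) + s * (inner ℝ w x : ℝ))) (Metric.ball_mem_nhds t₀ one_pos)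
    (Filter.Eventually.of_forall hm1) (integrable_exp_base hcgf y w t₀)
    hm2 ?_ hbd ?_).2
  · refine Filter.Eventually.of_forall fun x s hs => ?_
    rw [Real.norm_eq_abs, abs_mul, abs_of_pos (exp_pos _)]
    exact domination1 _ _ (le_of_lt (by simpa [Real.dist_eq] using hs))
  · refine Filter.Eventually.of_forall fun x s hs => ?_
    have h : HasDerivAt (fun u => (inner ℝ y x : ℝ) + u * (inner ℝ w x : ℝ))
        ((inner ℝ w x : ℝ)) s := ((hasDerivAt_mul_const _).const_add _)
    simpa [mul_comm] using h.exp

lemma hasDerivAt_A1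
    (hcgf : ∀ y : EuclideanSpace ℝ (Fin d), Integrable (fun x => exp ((inner ℝ y x : ℝ))) μ)
    (y w : EuclideanSpace ℝ (Fin d)) (t₀ : ℝ) :
    HasDerivAt (fun t => ∫ x, (inner ℝ w x : ℝ) * exp ((inner ℝ y x : ℝ) + t * (inner ℝ w x : ℝ)) ∂μ)
      (∫ x, (inner ℝ w x : ℝ) ^ 2 * exp ((inner ℝ y x : ℝ) + t₀ * (inner ℝ w x : ℝ)) ∂μ) t₀ := by
  have hbd : Integrable (fun x =>
      4 * (exp ((inner ℝ y x : ℝ) + (t₀ + 2) * (inner ℝ w x : ℝ)) +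
      exp ((inner ℝ y x : ℝ) + (t₀ - 2) * (inner ℝ w x : ℝ)))) μ :=
    ((integrable_exp_base hcgf y w (t₀ + 2)).add (integrable_exp_base hcgf y w (t₀ - 2))).const_mul 4
  have hm1 : ∀ s : ℝ, AEStronglyMeasurable
      (fun x : EuclideanSpace ℝ (Fin d) =>
        (inner ℝ w x : ℝ) * exp ((inner ℝ y x : ℝ) + s * (inner ℝ w x : ℝ))) μ :=
    fun s => ((inner_continuous w).mul (continuous_exp.comp ((inner_continuous y).add
      (continuous_const.mul (inner_continuous w))))).aestronglyMeasurable
  have hm2 : AEStronglyMeasurable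
      (fun x : EuclideanSpace ℝ (Fin d) =>
        (inner ℝ w x : ℝ) ^ 2 * exp ((inner ℝ y x : ℝ) + t₀ * (inner ℝ w x : ℝ))) μ :=
    (((inner_continuous w).pow 2).mul (continuous_exp.comp ((inner_continuous y).add
      (continuous_const.mul (inner_continuous w))))).aestronglyMeasurable
  refine (hasDerivAt_integral_of_dominated_loc_of_deriv_le
    (F' := fun s x => (inner ℝ w x : ℝ) ^ 2 * exp ((inner ℝ y x : ℝ) + s * (inner ℝ w x : ℝ))) (Metric.ball_mem_nhds t₀ one_pos)
    (Filter.Eventually.of_forall hm1) (integrable_inner_exp_base hcgf y w t₀)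
    hm2 ?_ hbd ?_).2
  · refine Filter.Eventually.of_forall fun x s hs => ?_
    rw [Real.norm_eq_abs, abs_mul, abs_of_pos (exp_pos _), abs_of_nonneg (sq_nonneg _)]
    exact domination2 _ _ (le_of_lt (by simpa [Real.dist_eq] using hs))
  · refine Filter.Eventually.of_forall fun x s hs => ?_
    have h : HasDerivAt (fun u => (inner ℝ y x : ℝ) + u * (inner ℝ w x : ℝ))
        ((inner ℝ w x : ℝ)) s := ((hasDerivAt_mul_const _).const_add _)
    have := h.exp.const_mul ((inner ℝ w x : ℝ))
    exact this.congr_deriv (by ring)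

end calc2

section calc3
variable {d : ℕ} {μ : Measure (EuclideanSpace ℝ (Fin d))} [IsProbabilityMeasure μ]

lemma A_pos
    (hcgf : ∀ y : EuclideanSpace ℝ (Fin d), Integrable (fun x => exp ((inner ℝ y x : ℝ))) μ)
    (y w : EuclideanSpace ℝ (Fin d)) (t : ℝ) :
    0 < ∫ x, exp ((inner ℝ y x : ℝ) + t * (inner ℝ w x : ℝ)) ∂μ := by
  have h := Z_pos hcgf (y + t • w)
  rwa [integral_congr_ae (Filter.Eventually.of_forall fun x => by
    simp only [inner_base] : (fun x => exp ((inner ℝ (y + t • w) x : ℝ))) =ᵐ[μ]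
      fun x => exp ((inner ℝ y x : ℝ) + t * (inner ℝ w x : ℝ)))] at h

lemma integrable_inner_sq_tilt'
    (hcgf : ∀ y : EuclideanSpace ℝ (Fin d), Integrable (fun x => exp ((inner ℝ y x : ℝ))) μ)
    (y z : EuclideanSpace ℝ (Fin d)) :
    Integrable (fun x => (inner ℝ z x : ℝ) ^ 2) (expTilt d μ y) := by
  rw [integrable_tilt_iff]
  refine ((integrable_inner_sq_mul_exp hcgf z y).mul_const
    ((∫ x, exp ((inner ℝ y x : ℝ)) ∂μ)⁻¹)).congr (Filter.Eventually.of_forall fun x => ?_)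
  beta_reduce
  rw [smul_eq_mul]; ring

lemma tilt_var_repr
    (hcgf : ∀ y : EuclideanSpace ℝ (Fin d), Integrable (fun x => exp ((inner ℝ y x : ℝ))) μ)
    (y w : EuclideanSpace ℝ (Fin d)) (t : ℝ) :
    ∫ x, (inner ℝ w (x - ∫ x', x' ∂(expTilt d μ (y + t • w))) : ℝ) ^ 2
        ∂(expTilt d μ (y + t • w)) =
      ((∫ x, (inner ℝ w x : ℝ) ^ 2 * exp ((inner ℝ y x : ℝ) + t * (inner ℝ w x : ℝ)) ∂μ) *
          (∫ x, exp ((inner ℝ y x : ℝ) + t * (inner ℝ w x : ℝ)) ∂μ) -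
        (∫ x, (inner ℝ w x : ℝ) * exp ((inner ℝ y x : ℝ) + t * (inner ℝ w x : ℝ)) ∂μ) ^ 2) /
        (∫ x, exp ((inner ℝ y x : ℝ) + t * (inner ℝ w x : ℝ)) ∂μ) ^ 2 := by
  set u := y + t • w with hu
  set ν := expTilt d μ u with hν
  set c : ℝ := (inner ℝ w (∫ x', x' ∂ν) : ℝ) with hc
  have hbase : ∀ x, (inner ℝ u x : ℝ) = (inner ℝ y x : ℝ) + t * (inner ℝ w x : ℝ) :=
    fun x => inner_base y w x t
  have hA : ∫ x, exp ((inner ℝ u x : ℝ)) ∂μ =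
      ∫ x, exp ((inner ℝ y x : ℝ) + t * (inner ℝ w x : ℝ)) ∂μ :=
    integral_congr_ae (Filter.Eventually.of_forall fun x => by simp only [hbase])
  have hA1 : ∫ x, (inner ℝ w x : ℝ) * exp ((inner ℝ u x : ℝ)) ∂μ =
      ∫ x, (inner ℝ w x : ℝ) * exp ((inner ℝ y x : ℝ) + t * (inner ℝ w x : ℝ)) ∂μ :=
    integral_congr_ae (Filter.Eventually.of_forall fun x => by simp only [hbase])
  have hA2 : ∫ x, (inner ℝ w x : ℝ) ^ 2 * exp ((inner ℝ u x : ℝ)) ∂μ =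
      ∫ x, (inner ℝ w x : ℝ) ^ 2 * exp ((inner ℝ y x : ℝ) + t * (inner ℝ w x : ℝ)) ∂μ :=
    integral_congr_ae (Filter.Eventually.of_forall fun x => by simp only [hbase])
  have hZpos : (0:ℝ) < ∫ x, exp ((inner ℝ u x : ℝ)) ∂μ := Z_pos hcgf u
  have hprob := tilt_isProbability hcgf u
  have hexpand : ∀ x : EuclideanSpace ℝ (Fin d),
      (inner ℝ w (x - ∫ x', x' ∂ν) : ℝ) ^ 2 =
      (inner ℝ w x : ℝ) ^ 2 - (2 * c) * (inner ℝ w x : ℝ) + c ^ 2 := by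
    intro x
    rw [inner_sub_right]
    ring
  rw [integral_congr_ae (Filter.Eventually.of_forall hexpand)]
  have hint2 : Integrable (fun x => (inner ℝ w x : ℝ) ^ 2) ν := integrable_inner_sq_tilt' hcgf u w
  have hint1 : Integrable (fun x => (2 * c) * (inner ℝ w x : ℝ)) ν :=
    (integrable_inner_tilt' hcgf u w).const_mul _
  have hint12 : Integrable (fun x => (inner ℝ w x : ℝ) ^ 2 - (2 * c) * (inner ℝ w x : ℝ)) ν :=
    hint2.sub hint1
  rw [integral_add hint12 (integrable_const _), integral_sub hint2 hint1,
    integral_const, probReal_univ, one_smul, integral_const_mul,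
    integral_inner_sq_tilt hcgf u w, integral_inner_tilt hcgf u w]
  have hceq : c = (∫ x, (inner ℝ w x : ℝ) * exp ((inner ℝ u x : ℝ)) ∂μ) /
      ∫ x, exp ((inner ℝ u x : ℝ)) ∂μ := inner_bary_tilt hcgf u w
  rw [hceq, hA, hA1, hA2]
  set A := ∫ x, exp ((inner ℝ y x : ℝ) + t * (inner ℝ w x : ℝ)) ∂μ
  set A1 := ∫ x, (inner ℝ w x : ℝ) * exp ((inner ℝ y x : ℝ) + t * (inner ℝ w x : ℝ)) ∂μ
  set A2 := ∫ x, (inner ℝ w x : ℝ) ^ 2 * exp ((inner ℝ y x : ℝ) + t * (inner ℝ w x : ℝ)) ∂μ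
  have hApos : (0:ℝ) < A := by rwa [hA] at hZpos
  field_simp
  ring

end calc3

lemma monoOn_of_deriv {f f' : ℝ → ℝ} (hf : ∀ t, HasDerivAt f (f' t) t)
    (h0 : ∀ t, 0 ≤ t → 0 ≤ f' t) : MonotoneOn f (Set.Ici (0:ℝ)) := by
  refine monotoneOn_of_deriv_nonneg (convex_Ici 0) ?_ ?_ ?_
  · exact fun t _ => (hf t).differentiableAt.continuousAt.continuousWithinAt
  · exact fun t _ => (hf t).differentiableAt.differentiableWithinAt
  · intro t ht
    rw [interior_Ici] at ht
    rw [(hf t).deriv]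
    exact h0 t (le_of_lt ht)

/-- Abstract convexity lower bound: if `(log A)'' ≥ 0` then `log A 1 ≥ log A 0 + (A1/A) 0`. -/
lemma gen_lower {A A1 A2 : ℝ → ℝ}
    (hA : ∀ t, HasDerivAt A (A1 t) t) (hA1 : ∀ t, HasDerivAt A1 (A2 t) t)
    (hApos : ∀ t, 0 < A t)
    (hvar : ∀ t, 0 ≤ (A2 t * A t - (A1 t) ^ 2) / (A t) ^ 2) :
    Real.log (A 0) + A1 0 / A 0 ≤ Real.log (A 1) := by
  have hpd : ∀ t, HasDerivAt (fun s => A1 s / A s)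
      ((A2 t * A t - (A1 t) ^ 2) / (A t) ^ 2) t := by
    intro t
    have h := (hA1 t).fun_div (hA t) (hApos t).ne'
    exact h.congr_deriv (by ring)
  have hmono : MonotoneOn (fun s => A1 s / A s) (Set.Ici (0:ℝ)) :=
    monoOn_of_deriv hpd (fun t _ => hvar t)
  have hgd : ∀ t, HasDerivAt (fun s => Real.log (A s)) (A1 t / A t) t :=
    fun t => (hA t).log (hApos t).ne'
  have hfd : ∀ t, HasDerivAt (fun s => Real.log (A s) - (A1 0 / A 0) * s)
      (A1 t / A t - A1 0 / A 0) t := by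
    intro t
    have h2 := (hasDerivAt_id t).const_mul (A1 0 / A 0)
    simp only [mul_one, id_eq] at h2
    exact (hgd t).sub h2
  have hfmono := monoOn_of_deriv hfd
    (fun t ht => sub_nonneg.2 (hmono Set.self_mem_Ici ht ht))
  have hkey := hfmono Set.self_mem_Ici (by norm_num : (1:ℝ) ∈ Set.Ici (0:ℝ)) zero_le_one
  simp only [mul_zero, mul_one, sub_zero] at hkey
  linarith

/-- Abstract smoothness upper bound: if `(log A)'' ≤ K` then
`log A 1 ≤ log A 0 + (A1/A) 0 + K/2`. -/
lemma gen_upper {A A1 A2 : ℝ → ℝ} {K : ℝ}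
    (hA : ∀ t, HasDerivAt A (A1 t) t) (hA1 : ∀ t, HasDerivAt A1 (A2 t) t)
    (hApos : ∀ t, 0 < A t)
    (hvar : ∀ t, (A2 t * A t - (A1 t) ^ 2) / (A t) ^ 2 ≤ K) :
    Real.log (A 1) ≤ Real.log (A 0) + A1 0 / A 0 + K / 2 := by
  have hpd : ∀ t, HasDerivAt (fun s => A1 s / A s)
      ((A2 t * A t - (A1 t) ^ 2) / (A t) ^ 2) t := by
    intro t
    have h := (hA1 t).fun_div (hA t) (hApos t).ne'
    exact h.congr_deriv (by ring)
  have hgd : ∀ t, HasDerivAt (fun s => Real.log (A s)) (A1 t / A t) t :=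
    fun t => (hA t).log (hApos t).ne'
  -- q s = A1 0 / A 0 + K s - p s is monotone on [0,∞)
  have hqd : ∀ t, HasDerivAt (fun s => A1 0 / A 0 + K * s - A1 s / A s)
      (K - (A2 t * A t - (A1 t) ^ 2) / (A t) ^ 2) t := by
    intro t
    have h2 := (hasDerivAt_id t).const_mul K
    simp only [mul_one, id_eq] at h2
    exact (h2.const_add _).sub (hpd t)
  have hqmono := monoOn_of_deriv hqd (fun t _ => sub_nonneg.2 (hvar t))
  have hple : ∀ t, 0 ≤ t → A1 t / A t ≤ A1 0 / A 0 + K * t := by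
    intro t ht
    have := hqmono Set.self_mem_Ici ht ht
    simp only [mul_zero, add_zero] at this
    linarith
  -- H s = log A 0 + (A1 0/A 0) s + K s^2/2 - log A s is monotone on [0,∞)
  have hHd : ∀ t, HasDerivAt
      (fun s => Real.log (A 0) + ((A1 0 / A 0) * s + (K / 2) * s ^ 2) - Real.log (A s))
      (A1 0 / A 0 + K * t - A1 t / A t) t := by
    intro t
    have h1 := (hasDerivAt_id t).const_mul (A1 0 / A 0)
    simp only [mul_one, id_eq] at h1
    have h2 := (hasDerivAt_pow 2 t).const_mul (K / 2)
    have h3 := ((h1.fun_add h2).const_add (Real.log (A 0))).fun_sub (hgd t)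
    exact h3.congr_deriv (by ring)
  have hHmono := monoOn_of_deriv hHd (fun t ht => sub_nonneg.2 (hple t ht))
  have hkey := hHmono Set.self_mem_Ici (by norm_num : (1:ℝ) ∈ Set.Ici (0:ℝ)) zero_le_one
  simp only [mul_zero, mul_one, one_pow, zero_pow, add_zero] at hkey
  nlinarith [hkey]

section chi
variable {d : ℕ} {μ : Measure (EuclideanSpace ℝ (Fin d))} [IsProbabilityMeasure μ]

lemma chi_convex
    (hcgf : ∀ y : EuclideanSpace ℝ (Fin d), Integrable (fun x => exp ((inner ℝ y x : ℝ))) μ)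
    (y z : EuclideanSpace ℝ (Fin d)) :
    Real.log (∫ x, exp ((inner ℝ y x : ℝ)) ∂μ) +
      (inner ℝ (z - y) (∫ x, x ∂(expTilt d μ y)) : ℝ) ≤
      Real.log (∫ x, exp ((inner ℝ z x : ℝ)) ∂μ) := by
  have hvar : ∀ t : ℝ, 0 ≤
      ((∫ x, (inner ℝ (z - y) x : ℝ) ^ 2 * exp ((inner ℝ y x : ℝ) + t * (inner ℝ (z - y) x : ℝ)) ∂μ) *
          (∫ x, exp ((inner ℝ y x : ℝ) + t * (inner ℝ (z - y) x : ℝ)) ∂μ) -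
        (∫ x, (inner ℝ (z - y) x : ℝ) *
          exp ((inner ℝ y x : ℝ) + t * (inner ℝ (z - y) x : ℝ)) ∂μ) ^ 2) /
        (∫ x, exp ((inner ℝ y x : ℝ) + t * (inner ℝ (z - y) x : ℝ)) ∂μ) ^ 2 := by
    intro t
    rw [← tilt_var_repr hcgf y (z - y) t]
    exact integral_nonneg fun x => sq_nonneg _
  have h := gen_lower (hasDerivAt_A hcgf y (z - y)) (hasDerivAt_A1 hcgf y (z - y))
    (A_pos hcgf y (z - y)) hvar
  have e0 : ∫ x, exp ((inner ℝ y x : ℝ) + (0:ℝ) * (inner ℝ (z - y) x : ℝ)) ∂μ =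
      ∫ x, exp ((inner ℝ y x : ℝ)) ∂μ :=
    integral_congr_ae (Filter.Eventually.of_forall fun x => by norm_num)
  have e1 : ∫ x, exp ((inner ℝ y x : ℝ) + (1:ℝ) * (inner ℝ (z - y) x : ℝ)) ∂μ =
      ∫ x, exp ((inner ℝ z x : ℝ)) ∂μ := by
    refine integral_congr_ae (Filter.Eventually.of_forall fun x => ?_)
    beta_reduce
    rw [one_mul, ← inner_add_left, add_sub_cancel]
  have e2 : ∫ x, (inner ℝ (z - y) x : ℝ) *
      exp ((inner ℝ y x : ℝ) + (0:ℝ) * (inner ℝ (z - y) x : ℝ)) ∂μ =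
      ∫ x, (inner ℝ (z - y) x : ℝ) * exp ((inner ℝ y x : ℝ)) ∂μ :=
    integral_congr_ae (Filter.Eventually.of_forall fun x => by norm_num)
  rw [e0, e1, e2] at h
  have hb : (inner ℝ (z - y) (∫ x, x ∂(expTilt d μ y)) : ℝ) =
      (∫ x, (inner ℝ (z - y) x : ℝ) * exp ((inner ℝ y x : ℝ)) ∂μ) /
        ∫ x, exp ((inner ℝ y x : ℝ)) ∂μ := inner_bary_tilt hcgf y (z - y)
  rw [hb]
  exact h

lemma chi_smooth
    (hcgf : ∀ y : EuclideanSpace ℝ (Fin d), Integrable (fun x => exp ((inner ℝ y x : ℝ))) μ)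
    {α : ℝ} {z : EuclideanSpace ℝ (Fin d)}
    (hcov : ∀ t : ℝ, ∫ x, (inner ℝ z (x - ∫ x', x' ∂(expTilt d μ (t • z))) : ℝ) ^ 2
        ∂(expTilt d μ (t • z)) ≤ α * ‖z‖ ^ 2) :
    Real.log (∫ x, exp ((inner ℝ z x : ℝ)) ∂μ) ≤
      (inner ℝ z (∫ x, x ∂μ) : ℝ) + α * ‖z‖ ^ 2 / 2 := by
  have hvar : ∀ t : ℝ,
      ((∫ x, (inner ℝ z x : ℝ) ^ 2 * exp ((inner ℝ (0:EuclideanSpace ℝ (Fin d)) x : ℝ) +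
          t * (inner ℝ z x : ℝ)) ∂μ) *
          (∫ x, exp ((inner ℝ (0:EuclideanSpace ℝ (Fin d)) x : ℝ) + t * (inner ℝ z x : ℝ)) ∂μ) -
        (∫ x, (inner ℝ z x : ℝ) * exp ((inner ℝ (0:EuclideanSpace ℝ (Fin d)) x : ℝ) +
          t * (inner ℝ z x : ℝ)) ∂μ) ^ 2) /
        (∫ x, exp ((inner ℝ (0:EuclideanSpace ℝ (Fin d)) x : ℝ) + t * (inner ℝ z x : ℝ)) ∂μ) ^ 2
        ≤ α * ‖z‖ ^ 2 := by
    intro t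
    rw [← tilt_var_repr hcgf 0 z t]
    have h := hcov t
    rwa [show (0:EuclideanSpace ℝ (Fin d)) + t • z = t • z from zero_add _]
  have h := gen_upper (hasDerivAt_A hcgf 0 z) (hasDerivAt_A1 hcgf 0 z)
    (A_pos hcgf 0 z) hvar
  have e0 : ∫ x, exp ((inner ℝ (0:EuclideanSpace ℝ (Fin d)) x : ℝ) +
      (0:ℝ) * (inner ℝ z x : ℝ)) ∂μ = 1 := by
    have : ∀ x : EuclideanSpace ℝ (Fin d),
        exp ((inner ℝ (0:EuclideanSpace ℝ (Fin d)) x : ℝ) + (0:ℝ) * (inner ℝ z x : ℝ)) = 1 := by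
      intro x
      simp [inner_zero_left]
    rw [integral_congr_ae (Filter.Eventually.of_forall this)]
    simp
  have e1 : ∫ x, exp ((inner ℝ (0:EuclideanSpace ℝ (Fin d)) x : ℝ) +
      (1:ℝ) * (inner ℝ z x : ℝ)) ∂μ = ∫ x, exp ((inner ℝ z x : ℝ)) ∂μ := by
    refine integral_congr_ae (Filter.Eventually.of_forall fun x => ?_)
    beta_reduce
    simp [inner_zero_left]
  have hid : Integrable (fun x : EuclideanSpace ℝ (Fin d) => x) μ := by
    refine (integrable_exp_smul_id hcgf 0).congr (Filter.Eventually.of_forall fun x => ?_)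
    simp [inner_zero_left]
  have e2 : ∫ x, (inner ℝ z x : ℝ) * exp ((inner ℝ (0:EuclideanSpace ℝ (Fin d)) x : ℝ) +
      (0:ℝ) * (inner ℝ z x : ℝ)) ∂μ = (inner ℝ z (∫ x, x ∂μ) : ℝ) := by
    rw [← integral_inner hid z]
    refine integral_congr_ae (Filter.Eventually.of_forall fun x => ?_)
    beta_reduce
    simp [inner_zero_left]
  rw [e0, e1, e2] at h
  simpa using h

end chi


/-- **Uniform covariance bounds on tilts imply entropic stability.**  Let `μ` be a
probability measure on `ℝ^d` whose cumulant generating function is finite everywhere,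
and suppose `Cov(T_y μ) ⪯ α I_d` for every `y` (expressed via quadratic forms:
`E_{T_y μ}[⟨u, x - b(T_y μ)⟩²] ≤ α ‖u‖²` for every direction `u`).  Then `μ` is
`α`-entropically stable: `½‖b(T_y μ) - b(μ)‖² ≤ α · KL(T_y μ ‖ μ)` for all `y`. -/
theorem covariance_bound_implies_entropic_stability (d : ℕ)
    (μ : Measure (EuclideanSpace ℝ (Fin d))) [IsProbabilityMeasure μ]
    (hcgf : ∀ y : EuclideanSpace ℝ (Fin d),
      Integrable (fun x => Real.exp ((inner ℝ y x : ℝ))) μ)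
    (α : ℝ) (hα : 0 < α)
    (hcov : ∀ y u : EuclideanSpace ℝ (Fin d),
      ∫ x, ((inner ℝ u (x - bary d (expTilt d μ y)) : ℝ)) ^ 2 ∂(expTilt d μ y) ≤
        α * ‖u‖ ^ 2) :
    ∀ y : EuclideanSpace ℝ (Fin d),
      (1 / 2) * ‖bary d (expTilt d μ y) - bary d μ‖ ^ 2 ≤
        α * klReal (expTilt d μ y) μ := by
  intro y
  simp only [bary] at hcov ⊢
  set b : EuclideanSpace ℝ (Fin d) := ∫ x, x ∂(expTilt d μ y) with hb
  set b₀ : EuclideanSpace ℝ (Fin d) := ∫ x, x ∂μ with hb₀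
  set z : EuclideanSpace ℝ (Fin d) := α⁻¹ • (b - b₀) with hz
  set m : ℝ := ‖b - b₀‖ with hm
  have hKL : klReal (expTilt d μ y) μ =
      (inner ℝ y b : ℝ) - Real.log (∫ x, exp ((inner ℝ y x : ℝ)) ∂μ) := klReal_tilt hcgf y
  have hcx := chi_convex hcgf y z
  have hsm : Real.log (∫ x, exp ((inner ℝ z x : ℝ)) ∂μ) ≤
      (inner ℝ z b₀ : ℝ) + α * ‖z‖ ^ 2 / 2 :=
    chi_smooth hcgf (fun t => hcov (t • z) z)
  have e1 : (inner ℝ (z - y) b : ℝ) = (inner ℝ z b : ℝ) - (inner ℝ y b : ℝ) := inner_sub_left _ _ _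
  have e2 : (inner ℝ z (b - b₀) : ℝ) = α⁻¹ * m ^ 2 := by
    rw [hz, real_inner_smul_left, real_inner_self_eq_norm_sq]
  have e3 : (inner ℝ z (b - b₀) : ℝ) = (inner ℝ z b : ℝ) - (inner ℝ z b₀ : ℝ) :=
    inner_sub_right _ _ _
  have e4 : ‖z‖ ^ 2 = α⁻¹ ^ 2 * m ^ 2 := by
    rw [hz, norm_smul, Real.norm_eq_abs, abs_of_pos (inv_pos.2 hα), mul_pow]
  have e5 : α * ‖z‖ ^ 2 = α⁻¹ * m ^ 2 := by
    rw [e4]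
    field_simp
  have hKLge : α⁻¹ * m ^ 2 / 2 ≤ klReal (expTilt d μ y) μ := by
    rw [hKL]
    linarith
  calc (1 / 2) * m ^ 2 = α * (α⁻¹ * m ^ 2 / 2) := by
        field_simp
    _ ≤ α * klReal (expTilt d μ y) μ := by
        exact mul_le_mul_of_nonneg_left hKLge hα.le
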